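/- Monotonicity boxes away from characteristic cycles, non-dicritical case (Lemma 4.2(1)). Let n ∈ ℕ and let ξ : ℝ³ → ℝ³ be a continuous vector field in coordinates (θ, z, ρ), 2π-periodic in θ, whose z-component has the form ξ_z(θ, z, ρ) = ρⁿ·A(θ, z, ρ) with A continuous and 2π-periodic in θ, and such that A(θ, z, 0) = a(z) depends only on z. Let α < β be reals with a(z) ≠ 0 for all z ∈ [α, β]. Then there exists δ > 0 such that for every integral curve γ of ξ whose image is contained in ℝ × [α, β] × (0, δ], the function t ↦ z(γ(t)) is strictly monotone; in particular no nonconstant periodic integral curve of ξ is contained in ℝ × [α, β] × (0, δ]. -/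

import Mathlib

open Real

lemma hasDerivAt_z_aux {γ : ℝ → ℝ × ℝ × ℝ} {v : ℝ × ℝ × ℝ} {t : ℝ}
    (h : HasDerivAt γ v t) : HasDerivAt (fun t => (γ t).2.1) v.2.1 t := by
  have h1 := (h.hasFDerivAt.snd).fst
  simpa using h1.hasDerivAt

/-- **Monotonicity boxes away from characteristic cycles, non-dicritical case**
(Lemma 4.2(1)): if `ξ_z = ρⁿ·A` with `A(θ,z,0) = a(z)` nonvanishing on `[α,β]`, then
for `δ` small the `z`-coordinate is strictly monotone along every integral curve of `ξ`
contained in `ℝ × [α,β] × (0,δ]`; in particular no nonconstant periodic integral curve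
of `ξ` is contained there. -/
theorem monotonicity_boxes_nondicritical
    (n : ℕ)
    (ξ : ℝ × ℝ × ℝ → ℝ × ℝ × ℝ) (hξ : Continuous ξ)
    (hper : ∀ θ z ρ : ℝ, ξ (θ + 2 * π, z, ρ) = ξ (θ, z, ρ))
    (A : ℝ × ℝ × ℝ → ℝ) (hA : Continuous A)
    (hAper : ∀ θ z ρ : ℝ, A (θ + 2 * π, z, ρ) = A (θ, z, ρ))
    (a : ℝ → ℝ) (hA0 : ∀ θ z : ℝ, A (θ, z, 0) = a z)
    (hξz : ∀ θ z ρ : ℝ, (ξ (θ, z, ρ)).2.1 = ρ ^ n * A (θ, z, ρ))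
    (α β : ℝ) (hαβ : α < β) (ha : ∀ z ∈ Set.Icc α β, a z ≠ 0) :
    ∃ δ > 0,
      (∀ γ : ℝ → ℝ × ℝ × ℝ, (∀ t, HasDerivAt γ (ξ (γ t)) t) →
        (∀ t, (γ t).2.1 ∈ Set.Icc α β ∧ (γ t).2.2 ∈ Set.Ioc 0 δ) →
        StrictMono (fun t => (γ t).2.1) ∨ StrictAnti (fun t => (γ t).2.1)) ∧
      ¬ ∃ (γ : ℝ → ℝ × ℝ × ℝ) (T : ℝ), 0 < T ∧
          (∀ t, HasDerivAt γ (ξ (γ t)) t) ∧ (∀ t, γ (t + T) = γ t) ∧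
          (∃ t s, γ t ≠ γ s) ∧
          (∀ t, (γ t).2.1 ∈ Set.Icc α β ∧ (γ t).2.2 ∈ Set.Ioc 0 δ) := by
  classical
  have hacont : Continuous a := by
    have h1 : Continuous fun z : ℝ => A (0, z, 0) :=
      hA.comp (by continuity)
    have : (fun z : ℝ => A (0, z, 0)) = a := funext fun z => hA0 0 z
    rwa [this] at h1
  -- minimum of |a| on [α,β]
  obtain ⟨z₀, hz₀, hmin⟩ := (isCompact_Icc (a := α) (b := β)).exists_isMinOn
    (Set.nonempty_Icc.2 hαβ.le) (hacont.abs.continuousOn)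
  set m : ℝ := |a z₀| with hm
  have hmpos : 0 < m := abs_pos.2 (ha z₀ hz₀)
  have hmle : ∀ z ∈ Set.Icc α β, m ≤ |a z| := fun z hz => isMinOn_iff.mp hmin z hz
  -- tube lemma
  set g : ℝ × ℝ × ℝ → ℝ := fun p => |A p - a p.2.1| with hg
  have hgcont : Continuous g :=
    (hA.sub (hacont.comp (continuous_fst.comp continuous_snd))).abs
  set U : Set (ℝ × ℝ × ℝ) := g ⁻¹' Set.Iio m with hU
  have hUopen : IsOpen U := isOpen_Iio.preimage hgcont
  set K : Set (ℝ × ℝ × ℝ) := Set.Icc 0 (2 * π) ×ˢ Set.Icc α β ×ˢ ({0} : Set ℝ) with hK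
  have hKcomp : IsCompact K :=
    isCompact_Icc.prod (isCompact_Icc.prod isCompact_singleton)
  have hKU : K ⊆ U := by
    rintro ⟨θ, z, ρ⟩ ⟨hθ, hz, hρ⟩
    simp only [Set.mem_singleton_iff] at hρ
    subst hρ
    simp only [hU, Set.mem_preimage, Set.mem_Iio, hg]
    simp [hA0, hmpos]
  obtain ⟨δ, hδpos, hthick⟩ := hKcomp.exists_thickening_subset_open hUopen hKU
  -- key estimate
  have key : ∀ θ z ρ : ℝ, z ∈ Set.Icc α β → ρ ∈ Set.Ioc 0 (δ / 2) →
      |A (θ, z, ρ) - a z| < m := by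
    intro θ z ρ hz hρ
    set θ' : ℝ := 2 * π * Int.fract (θ / (2 * π)) with hθ'
    have hperA : Function.Periodic (fun θ => A (θ, z, ρ)) (2 * π) := fun x => hAper x z ρ
    have h2π : (0 : ℝ) < 2 * π := by positivity
    have he : θ' = θ - (⌊θ / (2 * π)⌋ : ℤ) * (2 * π) := by
      rw [hθ', Int.fract]; field_simp
    have hAred : A (θ, z, ρ) = A (θ', z, ρ) := by
      rw [he]; exact (hperA.sub_int_mul_eq _).symm
    have hθ'mem : θ' ∈ Set.Icc 0 (2 * π) := by
      constructor
      · exact mul_nonneg h2π.le (Int.fract_nonneg _)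
      · nlinarith [Int.fract_lt_one (θ / (2 * π)), Int.fract_nonneg (θ / (2 * π))]
    have hmem : (θ', z, ρ) ∈ Metric.thickening δ K := by
      rw [Metric.mem_thickening_iff]
      refine ⟨(θ', z, 0), ⟨hθ'mem, hz, rfl⟩, ?_⟩
      have : dist ((θ', z, ρ) : ℝ × ℝ × ℝ) (θ', z, 0) = |ρ| := by
        simp [Prod.dist_eq, Real.dist_eq]
      rw [this, abs_of_pos hρ.1]
      linarith [hρ.2]
    have := hthick hmem
    simp only [hU, Set.mem_preimage, Set.mem_Iio, hg] at this
    rwa [hAred]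
  -- derivative of z-component
  have hderiv : ∀ (γ : ℝ → ℝ × ℝ × ℝ), (∀ t, HasDerivAt γ (ξ (γ t)) t) →
      ∀ t, HasDerivAt (fun t => (γ t).2.1) ((γ t).2.2 ^ n * A (γ t)) t := by
    intro γ hγ t
    have h1 := hasDerivAt_z_aux (hγ t)
    have h2 := hξz (γ t).1 (γ t).2.1 (γ t).2.2
    rwa [h2] at h1
  -- sign lemma: A positive on box when a α > 0, etc.
  have hmono : ∀ γ : ℝ → ℝ × ℝ × ℝ, (∀ t, HasDerivAt γ (ξ (γ t)) t) →
      (∀ t, (γ t).2.1 ∈ Set.Icc α β ∧ (γ t).2.2 ∈ Set.Ioc 0 (δ / 2)) →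
      StrictMono (fun t => (γ t).2.1) ∨ StrictAnti (fun t => (γ t).2.1) := by
    intro γ hγ hbox
    rcases (ha α ⟨le_rfl, hαβ.le⟩).lt_or_gt with hneg | hpos
    · -- a < 0 on [α,β]
      have hazneg : ∀ z ∈ Set.Icc α β, a z < 0 := by
        intro z hz
        by_contra h
        push_neg at h
        have hlt : 0 < a z := lt_of_le_of_ne h (Ne.symm (ha z hz))
        obtain ⟨c, hc, hac⟩ := intermediate_value_Icc hz.1
          (hacont.continuousOn) (Set.mem_Icc.2 ⟨hneg.le, hlt.le⟩)
        exact ha c ⟨hc.1, le_trans hc.2 hz.2⟩ hac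
      right
      apply strictAnti_of_hasDerivAt_neg (hderiv γ hγ)
      intro t
      obtain ⟨hz, hρ⟩ := hbox t
      have hk := key (γ t).1 (γ t).2.1 (γ t).2.2 hz hρ
      have hma : m ≤ -(a (γ t).2.1) := by
        have := hmle _ hz
        rwa [abs_of_neg (hazneg _ hz)] at this
      have hAneg : A (γ t) < 0 := by
        have habs := abs_lt.mp hk
        linarith [habs.1, habs.2]
      have : (0:ℝ) < (γ t).2.2 ^ n := pow_pos hρ.1 n
      nlinarith
    · -- a > 0 on [α,β]
      have hazpos : ∀ z ∈ Set.Icc α β, 0 < a z := by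
        intro z hz
        by_contra h
        push_neg at h
        have hlt : a z < 0 := lt_of_le_of_ne h (ha z hz)
        obtain ⟨c, hc, hac⟩ := intermediate_value_Icc' hz.1
          (hacont.continuousOn) (Set.mem_Icc.2 ⟨hlt.le, hpos.le⟩)
        exact ha c ⟨hc.1, le_trans hc.2 hz.2⟩ hac
      left
      apply strictMono_of_hasDerivAt_pos (hderiv γ hγ)
      intro t
      obtain ⟨hz, hρ⟩ := hbox t
      have hk := key (γ t).1 (γ t).2.1 (γ t).2.2 hz hρ
      have hma : m ≤ a (γ t).2.1 := by
        have := hmle _ hz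
        rwa [abs_of_pos (hazpos _ hz)] at this
      have hApos : 0 < A (γ t) := by
        have habs := abs_lt.mp hk
        linarith [habs.1, habs.2]
      have : (0:ℝ) < (γ t).2.2 ^ n := pow_pos hρ.1 n
      nlinarith
  refine ⟨δ / 2, by positivity, hmono, ?_⟩
  rintro ⟨γ, T, hT, hγ, hperiod, -, hbox⟩
  have h2 : (γ (0 + T)).2.1 = (γ 0).2.1 := by rw [hperiod]
  have hlt : (0 : ℝ) < 0 + T := by linarith
  rcases hmono γ hγ hbox with h | h
  · have h1 := h hlt
    simp only at h1
    linarith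
  · have h1 := h hlt
    simp only at h1
    linarith
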